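/- Every Γ-graded left R-module M over a Γ-graded ring R (Γ a cancellation monoid) admits a gr-injective envelope, and any two gr-injective envelopes of M are isomorphic as Γ-graded left R-modules. -/

import Mathlib

set_option maxHeartbeats 1000000
set_option synthInstance.maxHeartbeats 200000
set_option linter.unusedSectionVars false
set_option linter.unusedVariables false


namespace GradedPaper

open DirectSum

section Defs

variable {Γ : Type} [DecidableEq Γ] [AddCancelMonoid Γ]

section RingDefs

variable {R : Type} [Ring R]

/-- The grading of a module is compatible with the grading of the ring. -/
def SMulClosed (𝒜 : Γ → AddSubgroup R) {M : Type} [AddCommGroup M] [Module R M]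
    (ℳ : Γ → AddSubgroup M) : Prop :=
  ∀ ⦃i j : Γ⦄ ⦃a : R⦄ ⦃m : M⦄, a ∈ 𝒜 i → m ∈ ℳ j → a • m ∈ ℳ (i + j)

/-- The multiplicative condition `R_α R_β ⊆ R_{αβ}` of a graded ring. -/
def MulClosed (𝒜 : Γ → AddSubgroup R) : Prop :=
  ∀ ⦃i j : Γ⦄ ⦃a b : R⦄, a ∈ 𝒜 i → b ∈ 𝒜 j → a * b ∈ 𝒜 (i + j)

/-- A homogeneous (degree-preserving) homomorphism of graded modules. -/
def IsHomogeneousHom {M N : Type} [AddCommGroup M] [Module R M]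
    [AddCommGroup N] [Module R N]
    (ℳ : Γ → AddSubgroup M) (𝒩 : Γ → AddSubgroup N) (f : M →ₗ[R] N) : Prop :=
  ∀ i : Γ, ∀ x ∈ ℳ i, f x ∈ 𝒩 i

/-- A homogeneous homomorphism of degree `d`. -/
def IsHomogeneousOfDeg {M N : Type} [AddCommGroup M] [Module R M]
    [AddCommGroup N] [Module R N]
    (ℳ : Γ → AddSubgroup M) (𝒩 : Γ → AddSubgroup N) (d : Γ) (f : M →ₗ[R] N) : Prop :=
  ∀ i : Γ, ∀ x ∈ ℳ i, f x ∈ 𝒩 (i + d)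

/-- A submodule is graded if it contains the homogeneous components of its elements. -/
def IsGradedSubmodule {M : Type} [AddCommGroup M] [Module R M]
    (ℳ : Γ → AddSubgroup M) [DirectSum.Decomposition ℳ] (N : Submodule R M) : Prop :=
  ∀ x ∈ N, ∀ i : Γ, (DirectSum.decompose ℳ x i : M) ∈ N

/-- The induced grading on a submodule. -/
def subGrading {M : Type} [AddCommGroup M] [Module R M]
    (ℳ : Γ → AddSubgroup M) (N : Submodule R M) : Γ → AddSubgroup ↥N :=
  fun i => AddSubgroup.comap (N.subtype.toAddMonoidHom) (ℳ i)

/-- The induced grading on a quotient module. -/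
def quotGrading {M : Type} [AddCommGroup M] [Module R M]
    (ℳ : Γ → AddSubgroup M) (N : Submodule R M) : Γ → AddSubgroup (M ⧸ N) :=
  fun i => AddSubgroup.map (N.mkQ).toAddMonoidHom (ℳ i)

/-- A graded module is gr-free if it has a basis of homogeneous elements. -/
def IsGrFree {F : Type} [AddCommGroup F] [Module R F] (ℱ : Γ → AddSubgroup F) : Prop :=
  ∃ (ι : Type) (b : Module.Basis ι R F), ∀ j : ι, ∃ i : Γ, b j ∈ ℱ i

/-- Finitely generated gr-free. -/
def IsGrFreeFin {F : Type} [AddCommGroup F] [Module R F] (ℱ : Γ → AddSubgroup F) : Prop :=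
  ∃ (n : ℕ) (b : Module.Basis (Fin n) R F), ∀ j : Fin n, ∃ i : Γ, b j ∈ ℱ i

/-- Gr-projective: homogeneous lifting property against homogeneous epimorphisms. -/
def IsGrProjective (𝒜 : Γ → AddSubgroup R) {P : Type} [AddCommGroup P] [Module R P]
    (𝒬 : Γ → AddSubgroup P) : Prop :=
  ∀ (M N : Type) [AddCommGroup M] [Module R M] [AddCommGroup N] [Module R N]
    (ℳ : Γ → AddSubgroup M) (𝒩 : Γ → AddSubgroup N)
    [DirectSum.Decomposition ℳ] [DirectSum.Decomposition 𝒩],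
    SMulClosed 𝒜 ℳ → SMulClosed 𝒜 𝒩 →
    ∀ (g : M →ₗ[R] N), IsHomogeneousHom ℳ 𝒩 g → Function.Surjective g →
    ∀ (f : P →ₗ[R] N), IsHomogeneousHom 𝒬 𝒩 f →
    ∃ h : P →ₗ[R] M, IsHomogeneousHom 𝒬 ℳ h ∧ g ∘ₗ h = f

/-- Gr-injective: homogeneous extension property against homogeneous monomorphisms. -/
def IsGrInjective (𝒜 : Γ → AddSubgroup R) {E : Type} [AddCommGroup E] [Module R E]
    (ℰ : Γ → AddSubgroup E) : Prop :=
  ∀ (M N : Type) [AddCommGroup M] [Module R M] [AddCommGroup N] [Module R N]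
    (ℳ : Γ → AddSubgroup M) (𝒩 : Γ → AddSubgroup N)
    [DirectSum.Decomposition ℳ] [DirectSum.Decomposition 𝒩],
    SMulClosed 𝒜 ℳ → SMulClosed 𝒜 𝒩 →
    ∀ (g : M →ₗ[R] N), IsHomogeneousHom ℳ 𝒩 g → Function.Injective g →
    ∀ (f : M →ₗ[R] E), IsHomogeneousHom ℳ ℰ f →
    ∃ h : N →ₗ[R] E, IsHomogeneousHom 𝒩 ℰ h ∧ h ∘ₗ g = f

/-- A right nonzero divisor. -/
def IsRightNonZeroDivisor (r : R) : Prop := r ≠ 0 ∧ ∀ b : R, b * r = 0 → b = 0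

/-- Gr-divisible graded module. -/
def IsGrDivisible (𝒜 : Γ → AddSubgroup R) {M : Type} [AddCommGroup M] [Module R M]
    (ℳ : Γ → AddSubgroup M) : Prop :=
  ∀ (i j k : Γ), i + k = j → ∀ r ∈ 𝒜 i, IsRightNonZeroDivisor r →
    ∀ y ∈ ℳ j, ∃ x ∈ ℳ k, r • x = y

/-- Graded isomorphism of graded modules. -/
def GrIso {M N : Type} [AddCommGroup M] [Module R M] [AddCommGroup N] [Module R N]
    (ℳ : Γ → AddSubgroup M) (𝒩 : Γ → AddSubgroup N) : Prop :=
  ∃ e : M ≃ₗ[R] N, IsHomogeneousHom ℳ 𝒩 e.toLinearMap ∧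
    IsHomogeneousHom 𝒩 ℳ e.symm.toLinearMap

/-- Graded left hereditary ring: every homogeneous left ideal is gr-projective. -/
def GrLeftHereditary (𝒜 : Γ → AddSubgroup R) [DirectSum.Decomposition 𝒜] : Prop :=
  ∀ I : Submodule R R, IsGradedSubmodule 𝒜 I → IsGrProjective 𝒜 (subGrading 𝒜 I)

/-- Graded left semihereditary ring: every finitely generated homogeneous left ideal is
gr-projective. -/
def GrLeftSemihereditary (𝒜 : Γ → AddSubgroup R) [DirectSum.Decomposition 𝒜] : Prop :=
  ∀ I : Submodule R R, IsGradedSubmodule 𝒜 I → I.FG → IsGrProjective 𝒜 (subGrading 𝒜 I)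

/-- The natural grading on a direct limit of graded modules. -/
noncomputable def limGrading {ι : Type} [Preorder ι] [DecidableEq ι] (F : ι → Type)
    [∀ i, AddCommGroup (F i)] [∀ i, Module R (F i)]
    (ℱ : ∀ i, Γ → AddSubgroup (F i))
    (t : ∀ i j, i ≤ j → F i →ₗ[R] F j) : Γ → AddSubgroup (Module.DirectLimit F t) :=
  fun γ => ⨆ i, (ℱ i γ).map (Module.DirectLimit.of R ι F t i).toAddMonoidHom

end RingDefs

section CommDefs

variable {R : Type} [CommRing R]

/-- Gr-flat: tensoring preserves homogeneous monomorphisms of graded modules. -/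
def IsGrFlat (𝒜 : Γ → AddSubgroup R) {F : Type} [AddCommGroup F] [Module R F]
    (ℱ : Γ → AddSubgroup F) : Prop :=
  ∀ (M N : Type) [AddCommGroup M] [Module R M] [AddCommGroup N] [Module R N]
    (ℳ : Γ → AddSubgroup M) (𝒩 : Γ → AddSubgroup N)
    [DirectSum.Decomposition ℳ] [DirectSum.Decomposition 𝒩],
    SMulClosed 𝒜 ℳ → SMulClosed 𝒜 𝒩 →
    ∀ (f : M →ₗ[R] N), IsHomogeneousHom ℳ 𝒩 f → Function.Injective f →
      Function.Injective (LinearMap.rTensor F f)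

end CommDefs

end Defs

section Aux

variable {Γ : Type} [DecidableEq Γ] [AddCancelMonoid Γ] {R : Type} [Ring R]

section GradedLemmas

variable {M N : Type} [AddCommGroup M] [Module R M] [AddCommGroup N] [Module R N]
variable (ℳ : Γ → AddSubgroup M) (𝒩 : Γ → AddSubgroup N)
variable [DirectSum.Decomposition ℳ] [DirectSum.Decomposition 𝒩]

theorem hom_decompose (f : M →ₗ[R] N) (hf : IsHomogeneousHom ℳ 𝒩 f) (x : M) (δ : Γ) :
    f (DirectSum.decompose ℳ x δ) = DirectSum.decompose 𝒩 (f x) δ := by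
  induction x using DirectSum.Decomposition.inductionOn ℳ with
  | zero => simp
  | @homogeneous i m =>
    by_cases h : i = δ
    · subst h
      rw [DirectSum.decompose_of_mem_same ℳ m.2,
        DirectSum.decompose_of_mem_same 𝒩 (hf i m m.2)]
    · rw [DirectSum.decompose_of_mem_ne ℳ m.2 h,
        DirectSum.decompose_of_mem_ne 𝒩 (hf i m m.2) h, map_zero]
  | add a b ha hb =>
    simp only [map_add, DirectSum.decompose_add, DirectSum.add_apply, AddSubgroup.coe_add,
      AddMemClass.coe_add]
    rw [ha, hb]

theorem smul_decompose (𝒜 : Γ → AddSubgroup R) [DirectSum.Decomposition 𝒜]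
    (hsm : SMulClosed 𝒜 ℳ) {d : Γ} {a : R} (ha : a ∈ 𝒜 d) (x : M) (γ : Γ) :
    a • (DirectSum.decompose ℳ x γ : M) = DirectSum.decompose ℳ (a • x) (d + γ) := by
  induction x using DirectSum.Decomposition.inductionOn ℳ with
  | zero => simp
  | @homogeneous i m =>
    by_cases h : i = γ
    · subst h
      rw [DirectSum.decompose_of_mem_same ℳ m.2,
        DirectSum.decompose_of_mem_same ℳ (hsm ha m.2)]
    · rw [DirectSum.decompose_of_mem_ne ℳ m.2 h,
        DirectSum.decompose_of_mem_ne ℳ (hsm ha m.2) (fun hc => h (add_left_cancel hc)),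
        smul_zero]
  | add a b ha' hb' =>
    simp only [smul_add, DirectSum.decompose_add, DirectSum.add_apply, AddSubgroup.coe_add,
      AddMemClass.coe_add]
    rw [ha', hb']

theorem isGraded_bot : IsGradedSubmodule ℳ (⊥ : Submodule R M) := by
  intro x hx i
  rw [Submodule.mem_bot] at hx
  subst hx
  simp

theorem isGraded_inf {U V : Submodule R M} (hU : IsGradedSubmodule ℳ U)
    (hV : IsGradedSubmodule ℳ V) : IsGradedSubmodule ℳ (U ⊓ V) :=
  fun x hx i => ⟨hU x hx.1 i, hV x hx.2 i⟩

theorem isGraded_sup {U V : Submodule R M} (hU : IsGradedSubmodule ℳ U)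
    (hV : IsGradedSubmodule ℳ V) : IsGradedSubmodule ℳ (U ⊔ V) := by
  intro x hx i
  obtain ⟨u, hu, v, hv, rfl⟩ := Submodule.mem_sup.mp hx
  rw [DirectSum.decompose_add, DirectSum.add_apply, AddSubgroup.coe_add]
  exact Submodule.add_mem _ (Submodule.mem_sup_left (hU u hu i))
    (Submodule.mem_sup_right (hV v hv i))

theorem isGraded_ker (f : M →ₗ[R] N) (hf : IsHomogeneousHom ℳ 𝒩 f) :
    IsGradedSubmodule ℳ (LinearMap.ker f) := by
  intro x hx i
  rw [LinearMap.mem_ker] at hx ⊢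
  rw [hom_decompose ℳ 𝒩 f hf, hx]
  simp

theorem isGraded_comap (f : M →ₗ[R] N) (hf : IsHomogeneousHom ℳ 𝒩 f)
    {V : Submodule R N} (hV : IsGradedSubmodule 𝒩 V) :
    IsGradedSubmodule ℳ (V.comap f) := by
  intro x hx i
  rw [Submodule.mem_comap] at hx ⊢
  rw [hom_decompose ℳ 𝒩 f hf]
  exact hV _ hx i

theorem isGraded_map (f : M →ₗ[R] N) (hf : IsHomogeneousHom ℳ 𝒩 f)
    {U : Submodule R M} (hU : IsGradedSubmodule ℳ U) :
    IsGradedSubmodule 𝒩 (U.map f) := by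
  intro x hx i
  obtain ⟨u, hu, rfl⟩ := hx
  rw [← hom_decompose ℳ 𝒩 f hf]
  exact ⟨_, hU u hu i, rfl⟩

theorem isGraded_range (f : M →ₗ[R] N) (hf : IsHomogeneousHom ℳ 𝒩 f) :
    IsGradedSubmodule 𝒩 (LinearMap.range f) := by
  intro x hx i
  obtain ⟨u, rfl⟩ := hx
  rw [← hom_decompose ℳ 𝒩 f hf]
  exact ⟨_, rfl⟩

theorem decompose_finsum_mem {ι : Type} (s : Finset ι) (t : ι → M) (g : ι → Γ)
    (ht : ∀ i ∈ s, t i ∈ ℳ (g i)) (p : Submodule R M) (htp : ∀ i ∈ s, t i ∈ p) (δ : Γ) :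
    (DirectSum.decompose ℳ (∑ i ∈ s, t i) δ : M) ∈ p := by
  classical
  induction s using Finset.induction_on with
  | empty => simp
  | insert a s' hni ih =>
    rw [Finset.sum_insert hni, DirectSum.decompose_add, DirectSum.add_apply,
      AddSubgroup.coe_add]
    refine Submodule.add_mem _ ?_ (ih (fun i hi => ht i (Finset.mem_insert_of_mem hi))
      (fun i hi => htp i (Finset.mem_insert_of_mem hi)))
    by_cases h : g a = δ
    · rw [DirectSum.decompose_of_mem_same ℳ (h ▸ ht a (Finset.mem_insert_self a s'))]
      exact htp a (Finset.mem_insert_self a s')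
    · rw [DirectSum.decompose_of_mem_ne ℳ (ht a (Finset.mem_insert_self a s')) h]
      exact p.zero_mem

theorem isGraded_span_singleton (𝒜 : Γ → AddSubgroup R) [DirectSum.Decomposition 𝒜]
    (hsm : SMulClosed 𝒜 ℳ) {u : M} {γ : Γ} (hu : u ∈ ℳ γ) :
    IsGradedSubmodule ℳ (Submodule.span R {u}) := by
  classical
  intro x hx i
  obtain ⟨r, rfl⟩ := Submodule.mem_span_singleton.mp hx
  have hr : r • u = ∑ d ∈ DFinsupp.support (DirectSum.decompose 𝒜 r),
      ((DirectSum.decompose 𝒜 r d : R) • u) := by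
    rw [← Finset.sum_smul, DirectSum.sum_support_decompose 𝒜 r]
  rw [hr]
  refine decompose_finsum_mem ℳ _ _ (fun d => d + γ) ?_ _ ?_ i
  · intro d _
    exact hsm (DirectSum.decompose 𝒜 r d).2 hu
  · intro d _
    exact Submodule.smul_mem _ _ (Submodule.mem_span_singleton_self u)

theorem exists_homog_ne_zero {U : Submodule R M} (hU : IsGradedSubmodule ℳ U)
    (hne : U ≠ ⊥) : ∃ x, ∃ γ : Γ, x ∈ U ∧ x ∈ ℳ γ ∧ x ≠ 0 := by
  classical
  obtain ⟨x, hxU, hx0⟩ := Submodule.exists_mem_ne_zero_of_ne_bot hne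
  by_cases h : ∃ γ : Γ, (DirectSum.decompose ℳ x γ : M) ≠ 0
  · obtain ⟨γ, hγ⟩ := h
    exact ⟨_, γ, hU x hxU γ, (DirectSum.decompose ℳ x γ).2, hγ⟩
  · push_neg at h
    exfalso
    apply hx0
    rw [← DirectSum.sum_support_decompose ℳ x]
    exact Finset.sum_eq_zero fun γ _ => h γ

theorem isGraded_sSup_chain {S : Set (Submodule R M)} (hS : ∀ X ∈ S, IsGradedSubmodule ℳ X)
    (hchain : IsChain (· ≤ ·) S) (hne : S.Nonempty) : IsGradedSubmodule ℳ (sSup S) := by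
  intro x hx i
  obtain ⟨X, hXS, hxX⟩ := (Submodule.mem_sSup_of_directed hne hchain.directedOn).mp hx
  exact le_sSup hXS (hS X hXS x hxX i)

end GradedLemmas

section Sub

variable {F : Type} [AddCommGroup F] [Module R F] (ℱ : Γ → AddSubgroup F)
variable [DirectSum.Decomposition ℱ]

theorem coeAddMonoidHom_decompose (y : F) :
    DirectSum.coeAddMonoidHom ℱ (DirectSum.decompose ℱ y) = y :=
  (DirectSum.decompose ℱ).symm_apply_apply y

/-- Componentwise inclusion of a submodule grading into the ambient grading. -/
def subIncl (N : Submodule R F) (i : Γ) : (subGrading ℱ N i) →+ (ℱ i) where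
  toFun y := ⟨(y : ↥N), y.2⟩
  map_zero' := rfl
  map_add' _ _ := rfl

/-- The induced map on direct sums. -/
noncomputable def subJ (N : Submodule R F) :
    (⨁ i, subGrading ℱ N i) →+ ⨁ i, ℱ i :=
  DFinsupp.mapRange.addMonoidHom (fun i => subIncl ℱ N i)

theorem subJ_eq (N : Submodule R F) (z : ⨁ i, subGrading ℱ N i) :
    subJ ℱ N z = DFinsupp.mapRange (fun i x => subIncl ℱ N i x)
      (fun i => (subIncl ℱ N i).map_zero) z := rfl

theorem subJ_apply (N : Submodule R F) (z : ⨁ i, subGrading ℱ N i) (i : Γ) :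
    (subJ ℱ N z) i = subIncl ℱ N i (z i) := by
  rw [subJ_eq, DFinsupp.mapRange_apply]

theorem subJ_comm (N : Submodule R F) (z : ⨁ i, subGrading ℱ N i) :
    (DirectSum.coeAddMonoidHom ℱ) (subJ ℱ N z)
      = ((DirectSum.coeAddMonoidHom (subGrading ℱ N)) z : F) := by
  have h : (DirectSum.coeAddMonoidHom ℱ).comp (subJ ℱ N)
      = (N.subtype.toAddMonoidHom).comp (DirectSum.coeAddMonoidHom (subGrading ℱ N)) := by
    refine DirectSum.addHom_ext fun i y => ?_
    have h1 : subJ ℱ N (DirectSum.of _ i y) = DirectSum.of _ i (subIncl ℱ N i y) := by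
      rw [subJ_eq]
      exact DFinsupp.mapRange_single (f := fun i x => subIncl ℱ N i x)
        (hf := fun i => (subIncl ℱ N i).map_zero)
    simp only [AddMonoidHom.comp_apply, h1, DirectSum.coeAddMonoidHom_of]
    rfl
  exact DFunLike.congr_fun h z

/-- A section of the grading inclusion. -/
noncomputable def subSec (N : Submodule R F) (i : Γ) (y : ℱ i) : subGrading ℱ N i :=
  @dite _ ((y : F) ∈ N) (Classical.dec _) (fun h => ⟨⟨y, h⟩, y.2⟩) (fun _ => 0)

theorem subSec_zero (N : Submodule R F) (i : Γ) : subSec ℱ N i 0 = 0 := by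
  unfold subSec
  rw [dif_pos (show (((0 : ℱ i) : F)) ∈ N from N.zero_mem)]
  apply Subtype.ext
  apply Subtype.ext
  rfl

theorem subSec_of_mem (N : Submodule R F) (i : Γ) (y : ℱ i) (h : (y : F) ∈ N) :
    ((subSec ℱ N i y : ↥N) : F) = y := by
  unfold subSec
  rw [dif_pos h]

theorem subGrading_isInternal {N : Submodule R F} (hN : IsGradedSubmodule ℱ N) :
    DirectSum.IsInternal (subGrading ℱ N) := by
  classical
  constructor
  · intro z w hzw
    have h1 : subJ ℱ N z = subJ ℱ N w := by
      apply (DirectSum.Decomposition.isInternal ℱ).injective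
      rw [subJ_comm, subJ_comm, hzw]
    apply DFinsupp.ext
    intro i
    have h2 := congrArg (fun d => ((d i : ℱ i) : F)) h1
    simp only [subJ_apply] at h2
    exact Subtype.ext (Subtype.ext h2)
  · intro x
    refine ⟨DFinsupp.mapRange (fun i => subSec ℱ N i)
      (fun i => subSec_zero ℱ N i) (DirectSum.decompose ℱ (x : F)), ?_⟩
    apply Subtype.ext
    rw [← subJ_comm]
    have h3 : subJ ℱ N (DFinsupp.mapRange (fun i => subSec ℱ N i)
        (fun i => subSec_zero ℱ N i) (DirectSum.decompose ℱ (x : F)))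
        = DirectSum.decompose ℱ (x : F) := by
      apply DFinsupp.ext
      intro i
      rw [subJ_apply, DFinsupp.mapRange_apply]
      apply Subtype.ext
      exact subSec_of_mem ℱ N i _ (hN (x : F) x.2 i)
    rw [h3, coeAddMonoidHom_decompose]

/-- A decomposition for the induced grading on a graded submodule. -/
noncomputable def subDecomp {N : Submodule R F} (hN : IsGradedSubmodule ℱ N) :
    DirectSum.Decomposition (subGrading ℱ N) :=
  (subGrading_isInternal ℱ hN).chooseDecomposition

theorem subGrading_decompose_coe {N : Submodule R F} (hN : IsGradedSubmodule ℱ N)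
    [DirectSum.Decomposition (subGrading ℱ N)] (x : ↥N) (i : Γ) :
    ((DirectSum.decompose (subGrading ℱ N) x i : ↥N) : F)
      = DirectSum.decompose ℱ (x : F) i := by
  have h1 : subJ ℱ N (DirectSum.decompose (subGrading ℱ N) x)
      = DirectSum.decompose ℱ (x : F) := by
    apply (DirectSum.Decomposition.isInternal ℱ).injective
    rw [subJ_comm, coeAddMonoidHom_decompose, coeAddMonoidHom_decompose]
  have h2 := congrArg (fun d => ((d i : ℱ i) : F)) h1
  simp only [subJ_apply] at h2
  exact h2

theorem subGrading_smulClosed (𝒜 : Γ → AddSubgroup R) (hsm : SMulClosed 𝒜 ℱ)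
    (N : Submodule R F) : SMulClosed 𝒜 (subGrading ℱ N) := by
  intro i j a m ha hm
  show ((a • m : ↥N) : F) ∈ ℱ (i + j)
  rw [Submodule.coe_smul]
  exact hsm ha hm

theorem subGrading_subtype_hom (N : Submodule R F) :
    IsHomogeneousHom (subGrading ℱ N) ℱ N.subtype :=
  fun _ _ hx => hx

theorem isGraded_map_subtype {N : Submodule R F} (hN : IsGradedSubmodule ℱ N)
    [DirectSum.Decomposition (subGrading ℱ N)] {U : Submodule R ↥N}
    (hU : IsGradedSubmodule (subGrading ℱ N) U) :
    IsGradedSubmodule ℱ (U.map N.subtype) := by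
  intro x hx i
  obtain ⟨u, hu, rfl⟩ := hx
  rw [Submodule.subtype_apply, ← subGrading_decompose_coe ℱ hN u i]
  exact ⟨_, hU u hu i, rfl⟩

end Sub

section Coind

variable {Γ : Type} [DecidableEq Γ] [AddCancelMonoid Γ] {R : Type} [Ring R]
variable (𝒜 : Γ → AddSubgroup R) (Q : Type) [AddCommGroup Q] [Module R Q]

/-- The coinduced graded module on an injective container. -/
def Coind (_𝒜 : Γ → AddSubgroup R) (Q : Type) [AddCommGroup Q] : Type := Γ →₀ Q

noncomputable instance : AddCommGroup (Coind 𝒜 Q) :=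
  inferInstanceAs (AddCommGroup (Γ →₀ Q))

/-- Identification of the coinduced module with the finitely supported functions. -/
def coindCast : Coind 𝒜 Q ≃+ (Γ →₀ Q) := { Equiv.refl _ with map_add' := fun _ _ => rfl }

namespace Coind

variable {𝒜 Q}

/-- Single-coordinate elements. -/
noncomputable def single (γ : Γ) (q : Q) : Coind 𝒜 Q :=
  (coindCast 𝒜 Q).symm (Finsupp.single γ q)

theorem cast_single (γ : Γ) (q : Q) :
    coindCast 𝒜 Q (single γ q) = Finsupp.single γ q :=
  (coindCast 𝒜 Q).apply_symm_apply _

theorem single_zero (γ : Γ) : (single γ (0 : Q) : Coind 𝒜 Q) = 0 := by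
  unfold single
  rw [Finsupp.single_zero, map_zero]

theorem single_add (γ : Γ) (q q' : Q) :
    (single γ (q + q') : Coind 𝒜 Q) = single γ q + single γ q' := by
  unfold single
  rw [Finsupp.single_add, map_add]

theorem single_neg (γ : Γ) (q : Q) :
    (single γ (-q) : Coind 𝒜 Q) = -single γ q := by
  unfold single
  rw [Finsupp.single_neg, map_neg]

theorem addHom_ext {P : Type} [AddCommMonoid P] {f g : Coind 𝒜 Q →+ P}
    (h : ∀ γ q, f (single γ q) = g (single γ q)) : f = g := by
  have h2 : f.comp (coindCast 𝒜 Q).symm.toAddMonoidHom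
      = g.comp (coindCast 𝒜 Q).symm.toAddMonoidHom := by
    refine Finsupp.addHom_ext fun γ q => ?_
    exact h γ q
  ext x
  have h3 := DFunLike.congr_fun h2 (coindCast 𝒜 Q x)
  simpa using h3

theorem induction {p : Coind 𝒜 Q → Prop} (h0 : p 0) (hs : ∀ γ q, p (single γ q))
    (ha : ∀ x y, p x → p y → p (x + y)) (x : Coind 𝒜 Q) : p x := by
  have key : ∀ f : Γ →₀ Q, p ((coindCast 𝒜 Q).symm f) := by
    intro f
    induction f using Finsupp.induction with
    | zero => simpa using h0
    | single_add a b f _ _ hf => rw [map_add]; exact ha _ _ (hs a b) hf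
  have hx := key (coindCast 𝒜 Q x)
  simpa using hx

end Coind

/-- Shift-and-multiply endomorphism. -/
noncomputable def coindMulF (d : Γ) (e : AddMonoid.End Q) : AddMonoid.End (Coind 𝒜 Q) :=
  ((coindCast 𝒜 Q).symm.toAddMonoidHom.comp
    ((Finsupp.mapDomain.addMonoidHom (fun γ => d + γ)).comp
      ((Finsupp.mapRange.addMonoidHom e).comp (coindCast 𝒜 Q).toAddMonoidHom)))

theorem coindMulF_single (d : Γ) (e : AddMonoid.End Q) (γ : Γ) (q : Q) :
    coindMulF 𝒜 Q d e (Coind.single γ q) = Coind.single (d + γ) (e q) := by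
  show (coindCast 𝒜 Q).symm
      (Finsupp.mapDomain (fun γ => d + γ)
        (Finsupp.mapRange (e : Q →+ Q) (map_zero (e : Q →+ Q)) (Finsupp.single γ q))) = _
  rw [Finsupp.mapRange_single, Finsupp.mapDomain_single]
  rfl

/-- The homogeneous-piece action. -/
noncomputable def coindMu (d : Γ) : (𝒜 d) →+ AddMonoid.End (Coind 𝒜 Q) where
  toFun a := coindMulF 𝒜 Q d (Module.toAddMonoidEnd R Q a.1)
  map_zero' := by
    refine Coind.addHom_ext fun γ q => ?_
    erw [coindMulF_single]
    show Coind.single (d + γ) ((0 : R) • q) = (0 : AddMonoid.End (Coind 𝒜 Q)) (Coind.single γ q)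
    rw [zero_smul, Coind.single_zero]
    rfl
  map_add' a b := by
    refine Coind.addHom_ext fun γ q => ?_
    erw [coindMulF_single]
    show Coind.single (d + γ) ((a.1 + b.1) • q) = _
    rw [add_smul, Coind.single_add]
    show _ = coindMulF 𝒜 Q d (Module.toAddMonoidEnd R Q a.1) (Coind.single γ q)
      + coindMulF 𝒜 Q d (Module.toAddMonoidEnd R Q b.1) (Coind.single γ q)
    rw [coindMulF_single, coindMulF_single]
    rfl

theorem coindMu_apply (d : Γ) (a : 𝒜 d) (x : Coind 𝒜 Q) :
    coindMu 𝒜 Q d a x = coindMulF 𝒜 Q d (Module.toAddMonoidEnd R Q a.1) x := rfl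

variable [GradedRing 𝒜]

/-- The additive part of the scalar action of `R` on the coinduced module. -/
noncomputable def coindRhoHom : R →+ AddMonoid.End (Coind 𝒜 Q) :=
  (DirectSum.toAddMonoid (fun d => coindMu 𝒜 Q d)).comp
    (DirectSum.decomposeAddEquiv 𝒜).toAddMonoidHom

theorem coindRhoHom_of_mem {d : Γ} {a : R} (ha : a ∈ 𝒜 d) :
    coindRhoHom 𝒜 Q a = coindMulF 𝒜 Q d (Module.toAddMonoidEnd R Q a) := by
  unfold coindRhoHom
  simp only [AddMonoidHom.comp_apply, AddEquiv.coe_toAddMonoidHom,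
    DirectSum.decomposeAddEquiv_apply]
  rw [DirectSum.decompose_of_mem 𝒜 ha, DirectSum.toAddMonoid_of]
  rfl

theorem coindRhoHom_one : coindRhoHom 𝒜 Q 1 = 1 := by
  rw [coindRhoHom_of_mem 𝒜 Q (SetLike.GradedOne.one_mem (A := 𝒜))]
  refine Coind.addHom_ext fun γ q => ?_
  erw [coindMulF_single]
  show Coind.single (0 + γ) ((1 : R) • q) = (1 : AddMonoid.End (Coind 𝒜 Q)) (Coind.single γ q)
  rw [one_smul, zero_add]
  rfl

theorem coindRhoHom_mul (r s : R) :
    coindRhoHom 𝒜 Q (r * s) = coindRhoHom 𝒜 Q r * coindRhoHom 𝒜 Q s := by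
  induction r using DirectSum.Decomposition.inductionOn 𝒜 with
  | zero => simp
  | @homogeneous d a =>
    induction s using DirectSum.Decomposition.inductionOn 𝒜 with
    | zero => simp
    | @homogeneous e b =>
      rw [coindRhoHom_of_mem 𝒜 Q (SetLike.GradedMul.mul_mem a.2 b.2),
        coindRhoHom_of_mem 𝒜 Q a.2, coindRhoHom_of_mem 𝒜 Q b.2]
      refine Coind.addHom_ext fun γ q => ?_
      erw [coindMulF_single]
      show Coind.single (d + e + γ) (((a : R) * (b : R)) • q)
        = (coindMulF 𝒜 Q d (Module.toAddMonoidEnd R Q (a : R)))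
            ((coindMulF 𝒜 Q e (Module.toAddMonoidEnd R Q (b : R))) (Coind.single γ q))
      rw [coindMulF_single, coindMulF_single]
      show _ = Coind.single (d + (e + γ)) ((a : R) • (b : R) • q)
      rw [mul_smul, add_assoc]
    | add x y hx hy => rw [mul_add, map_add, map_add, mul_add, hx, hy]
  | add x y hx hy => rw [add_mul, map_add, map_add, add_mul, hx, hy]

/-- The scalar action of `R` on the coinduced module. -/
noncomputable def coindRho : R →+* AddMonoid.End (Coind 𝒜 Q) where
  toFun := coindRhoHom 𝒜 Q
  map_one' := coindRhoHom_one 𝒜 Q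
  map_mul' := coindRhoHom_mul 𝒜 Q
  map_zero' := map_zero _
  map_add' := map_add _

noncomputable instance : Module R (Coind 𝒜 Q) :=
  Module.compHom _ (coindRho 𝒜 Q)

theorem coind_smul_def (r : R) (x : Coind 𝒜 Q) : r • x = coindRhoHom 𝒜 Q r x := rfl

theorem coind_smul_single {d : Γ} {a : R} (ha : a ∈ 𝒜 d) (γ : Γ) (q : Q) :
    a • (Coind.single γ q : Coind 𝒜 Q) = Coind.single (d + γ) (a • q) := by
  rw [coind_smul_def, coindRhoHom_of_mem 𝒜 Q ha, coindMulF_single]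
  rfl

/-- The coinduced grading. -/
def coindGrading (γ : Γ) : AddSubgroup (Coind 𝒜 Q) where
  carrier := { x | ∃ q, x = Coind.single γ q }
  zero_mem' := ⟨0, (Coind.single_zero γ).symm⟩
  add_mem' := by
    rintro x y ⟨q1, rfl⟩ ⟨q2, rfl⟩
    exact ⟨q1 + q2, (Coind.single_add γ q1 q2).symm⟩
  neg_mem' := by
    rintro x ⟨q, rfl⟩
    exact ⟨-q, (Coind.single_neg γ q).symm⟩

theorem coind_smulClosed : SMulClosed 𝒜 (coindGrading 𝒜 Q) := by
  rintro i j a m ha ⟨q, rfl⟩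
  exact ⟨a • q, coind_smul_single 𝒜 Q ha j q⟩

/-- Coordinate projections. -/
noncomputable def coindCoord (δ : Γ) : Coind 𝒜 Q →+ Q :=
  (Finsupp.applyAddHom δ).comp (coindCast 𝒜 Q).toAddMonoidHom

theorem coindCoord_single (δ γ : Γ) (q : Q) :
    coindCoord 𝒜 Q δ (Coind.single γ q) = if γ = δ then q else 0 := by
  unfold coindCoord
  simp only [AddMonoidHom.comp_apply, AddEquiv.coe_toAddMonoidHom, Coind.cast_single]
  exact Finsupp.single_apply

/-- The augmentation map. -/
noncomputable def coindAugHom : Coind 𝒜 Q →+ Q :=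
  (Finsupp.liftAddHom (fun _ => AddMonoidHom.id Q)).comp (coindCast 𝒜 Q).toAddMonoidHom

theorem coindAugHom_single (γ : Γ) (q : Q) :
    coindAugHom 𝒜 Q (Coind.single γ q) = q := by
  unfold coindAugHom
  simp only [AddMonoidHom.comp_apply, AddEquiv.coe_toAddMonoidHom, Coind.cast_single]
  rw [Finsupp.liftAddHom_apply_single]
  rfl

/-- The augmentation map as a linear map. -/
noncomputable def coindAug : Coind 𝒜 Q →ₗ[R] Q where
  toFun := coindAugHom 𝒜 Q
  map_add' := (coindAugHom 𝒜 Q).map_add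
  map_smul' := by
    intro r x
    show coindAugHom 𝒜 Q (r • x) = r • coindAugHom 𝒜 Q x
    induction r using DirectSum.Decomposition.inductionOn 𝒜 with
    | zero => rw [zero_smul, zero_smul, map_zero]
    | @homogeneous d a =>
      induction x using Coind.induction with
      | h0 => rw [smul_zero, map_zero, smul_zero]
      | hs γ q =>
        rw [coind_smul_single 𝒜 Q a.2, coindAugHom_single, coindAugHom_single]
      | ha x y hx hy => rw [smul_add, map_add, map_add, hx, hy, smul_add]
    | add r s hr hs => rw [add_smul, map_add, hr, hs, add_smul]

/-- The decomposition map for the coinduced grading. -/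
noncomputable def coindDecompHom : Coind 𝒜 Q →+ ⨁ γ, coindGrading 𝒜 Q γ :=
  (Finsupp.liftAddHom (fun γ =>
    (DirectSum.of (fun γ => (coindGrading 𝒜 Q γ)) γ).comp
      { toFun := fun q => (⟨Coind.single γ q, ⟨q, rfl⟩⟩ : coindGrading 𝒜 Q γ)
        map_zero' := by apply Subtype.ext; exact Coind.single_zero γ
        map_add' := fun a b => by apply Subtype.ext; exact Coind.single_add γ a b })).comp
    (coindCast 𝒜 Q).toAddMonoidHom

theorem coindDecompHom_single (γ : Γ) (q : Q) :
    coindDecompHom 𝒜 Q (Coind.single γ q)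
      = DirectSum.of (fun γ => (coindGrading 𝒜 Q γ)) γ ⟨Coind.single γ q, ⟨q, rfl⟩⟩ := by
  unfold coindDecompHom
  simp only [AddMonoidHom.comp_apply, AddEquiv.coe_toAddMonoidHom, Coind.cast_single]
  rw [Finsupp.liftAddHom_apply_single]
  rfl

theorem coind_left_inv :
    (DirectSum.coeAddMonoidHom (coindGrading 𝒜 Q)).comp (coindDecompHom 𝒜 Q)
      = AddMonoidHom.id (Coind 𝒜 Q) := by
  refine Coind.addHom_ext fun γ q => ?_
  simp only [AddMonoidHom.comp_apply, AddMonoidHom.id_apply]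
  rw [coindDecompHom_single, DirectSum.coeAddMonoidHom_of]

theorem coind_right_inv :
    (coindDecompHom 𝒜 Q).comp (DirectSum.coeAddMonoidHom (coindGrading 𝒜 Q))
      = AddMonoidHom.id (⨁ γ, coindGrading 𝒜 Q γ) := by
  refine DirectSum.addHom_ext fun γ y => ?_
  obtain ⟨x, hx⟩ := y
  obtain ⟨q, rfl⟩ := hx
  simp only [AddMonoidHom.comp_apply, AddMonoidHom.id_apply]
  rw [DirectSum.coeAddMonoidHom_of]
  show coindDecompHom 𝒜 Q (Coind.single γ q) = _
  rw [coindDecompHom_single]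

/-- The coinduced grading indeed decomposes the coinduced module. -/
noncomputable def coindDecomp : DirectSum.Decomposition (coindGrading 𝒜 Q) :=
  DirectSum.Decomposition.ofAddHom (coindGrading 𝒜 Q) (coindDecompHom 𝒜 Q)
    (coind_left_inv 𝒜 Q) (coind_right_inv 𝒜 Q)


section Psi

variable {X : Type} [AddCommGroup X] [Module R X] (𝒳 : Γ → AddSubgroup X)
variable [DirectSum.Decomposition 𝒳]

/-- The component maps underlying `psi`. -/
noncomputable def psiComp (u : X →ₗ[R] Q) (γ : Γ) : (𝒳 γ) →+ Q :=
  u.toAddMonoidHom.comp (AddSubgroup.subtype (𝒳 γ))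

/-- The middle map underlying `psi`. -/
noncomputable def psiJ (u : X →ₗ[R] Q) : (⨁ γ, 𝒳 γ) →+ (Π₀ _ : Γ, Q) :=
  DFinsupp.mapRange.addMonoidHom (fun γ => psiComp Q 𝒳 u γ)

theorem psiJ_single (u : X →ₗ[R] Q) (γ : Γ) (y : 𝒳 γ) :
    psiJ Q 𝒳 u (DirectSum.of (fun γ => (𝒳 γ)) γ y) = DFinsupp.single γ (u y) := by
  have h : psiJ Q 𝒳 u (DirectSum.of (fun γ => (𝒳 γ)) γ y)
      = DFinsupp.mapRange (fun γ x => psiComp Q 𝒳 u γ x)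
        (fun γ => (psiComp Q 𝒳 u γ).map_zero) (DFinsupp.single γ y) := rfl
  rw [h, DFinsupp.mapRange_single]
  rfl

/-- The adjunction map sending a linear map into `Q` to a homogeneous map into the
coinduced module. -/
noncomputable def psiHom (u : X →ₗ[R] Q) : X →+ Coind 𝒜 Q :=
  ((coindCast 𝒜 Q).symm.toAddMonoidHom.comp
    ((DFinsupp.sumAddHom (fun γ => Finsupp.singleAddHom γ)).comp
      ((psiJ Q 𝒳 u).comp (DirectSum.decomposeAddEquiv 𝒳).toAddMonoidHom)))

theorem psiHom_of_mem (u : X →ₗ[R] Q) {x : X} {γ : Γ} (hx : x ∈ 𝒳 γ) :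
    psiHom 𝒜 Q 𝒳 u x = Coind.single γ (u x) := by
  show (coindCast 𝒜 Q).symm
    ((DFinsupp.sumAddHom (fun γ => Finsupp.singleAddHom γ))
      (psiJ Q 𝒳 u (DirectSum.decompose 𝒳 x))) = _
  rw [DirectSum.decompose_of_mem 𝒳 hx, psiJ_single, DFinsupp.sumAddHom_single]
  rfl

theorem psiHom_homog (u : X →ₗ[R] Q) {x : X} {γ : Γ} (hx : x ∈ 𝒳 γ) :
    psiHom 𝒜 Q 𝒳 u x ∈ coindGrading 𝒜 Q γ := by
  rw [psiHom_of_mem 𝒜 Q 𝒳 u hx]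
  exact ⟨u x, rfl⟩

/-- The adjunction map as a linear map. -/
noncomputable def psi (hsm : SMulClosed 𝒜 𝒳) (u : X →ₗ[R] Q) : X →ₗ[R] Coind 𝒜 Q where
  toFun := psiHom 𝒜 Q 𝒳 u
  map_add' := (psiHom 𝒜 Q 𝒳 u).map_add
  map_smul' := by
    intro r x
    show psiHom 𝒜 Q 𝒳 u (r • x) = r • psiHom 𝒜 Q 𝒳 u x
    induction r using DirectSum.Decomposition.inductionOn 𝒜 with
    | zero => rw [zero_smul, zero_smul, map_zero]
    | @homogeneous d a =>
      induction x using DirectSum.Decomposition.inductionOn 𝒳 with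
      | zero => rw [smul_zero, map_zero, smul_zero]
      | @homogeneous γ m =>
        rw [psiHom_of_mem 𝒜 Q 𝒳 u m.2, psiHom_of_mem 𝒜 Q 𝒳 u (hsm a.2 m.2),
          coind_smul_single 𝒜 Q a.2, map_smul]
      | add x y hx hy => rw [smul_add, map_add, map_add, hx, hy, smul_add]
    | add r s hr hs => rw [add_smul, map_add, hr, hs, add_smul]

theorem psiHom_coord (u : X →ₗ[R] Q) (x : X) (γ : Γ) :
    coindCoord 𝒜 Q γ (psiHom 𝒜 Q 𝒳 u x) = u (DirectSum.decompose 𝒳 x γ) := by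
  induction x using DirectSum.Decomposition.inductionOn 𝒳 with
  | zero => simp
  | @homogeneous i m =>
    rw [psiHom_of_mem 𝒜 Q 𝒳 u m.2, coindCoord_single]
    by_cases h : i = γ
    · subst h
      rw [if_pos rfl, DirectSum.decompose_of_mem_same 𝒳 m.2]
    · rw [if_neg h, DirectSum.decompose_of_mem_ne 𝒳 m.2 h, map_zero]
  | add x y hx hy =>
    simp only [map_add, DirectSum.decompose_add, DirectSum.add_apply, AddSubgroup.coe_add,
      AddMemClass.coe_add]
    rw [hx, hy]

theorem psi_apply (hsm : SMulClosed 𝒜 𝒳) (u : X →ₗ[R] Q) (x : X) :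
    psi 𝒜 Q 𝒳 hsm u x = psiHom 𝒜 Q 𝒳 u x := rfl

end Psi

/-- The coinduced module over an injective container is gr-injective. -/
theorem coind_isGrInjective [Module.Injective R Q] :
    IsGrInjective 𝒜 (coindGrading 𝒜 Q) := by
  intro A B _ _ _ _ 𝒳 𝒴 _ _ hsmA hsmB g hg hginj f hf
  obtain ⟨v, hv⟩ := Module.Injective.extension_property R Q A B g hginj ((coindAug 𝒜 Q) ∘ₗ f)
  refine ⟨psi 𝒜 Q 𝒴 hsmB v, fun i x hx => psiHom_homog 𝒜 Q 𝒴 v hx, ?_⟩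
  apply LinearMap.ext
  intro x
  simp only [LinearMap.comp_apply, psi_apply]
  induction x using DirectSum.Decomposition.inductionOn 𝒳 with
  | zero => rw [map_zero, map_zero, map_zero]
  | @homogeneous γ m =>
    rw [psiHom_of_mem 𝒜 Q 𝒴 v (hg γ m m.2)]
    have h1 : v (g m) = coindAug 𝒜 Q (f m) := by
      have := DFunLike.congr_fun hv (m : A)
      simpa using this
    rw [h1]
    obtain ⟨q, hq⟩ := hf γ m m.2
    rw [hq]
    show Coind.single γ (coindAugHom 𝒜 Q (Coind.single γ q)) = _
    rw [coindAugHom_single]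
  | add x y hx hy => rw [map_add, map_add, map_add, hx, hy]

end Coind

section OneMem

variable {Γ : Type} [DecidableEq Γ] [AddCancelMonoid Γ] {R : Type} [Ring R]

theorem one_mem_zero (𝒜 : Γ → AddSubgroup R) [DirectSum.Decomposition 𝒜]
    (hmul : MulClosed 𝒜) : (1 : R) ∈ 𝒜 0 := by
  classical
  have key : ∀ (e : Γ) (b : R), b ∈ 𝒜 e → b * (DirectSum.decompose 𝒜 (1 : R) 0 : R) = b := by
    intro e b hb
    have h1 : b = ∑ d ∈ DFinsupp.support (DirectSum.decompose 𝒜 (1 : R)),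
        b * (DirectSum.decompose 𝒜 (1 : R) d : R) := by
      rw [← Finset.mul_sum, DirectSum.sum_support_decompose 𝒜 (1 : R), mul_one]
    have h2 := congrArg (fun y => (DirectSum.decompose 𝒜 y e : R)) h1
    simp only at h2
    rw [DirectSum.decompose_of_mem_same 𝒜 hb] at h2
    have h3 : DirectSum.decompose 𝒜
        (∑ d ∈ DFinsupp.support (DirectSum.decompose 𝒜 (1 : R)),
          b * (DirectSum.decompose 𝒜 (1 : R) d : R))
        = ∑ d ∈ DFinsupp.support (DirectSum.decompose 𝒜 (1 : R)),
          DirectSum.decompose 𝒜 (b * (DirectSum.decompose 𝒜 (1 : R) d : R)) :=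
      map_sum (DirectSum.decomposeAddEquiv 𝒜) _ _
    rw [h3] at h2
    rw [DFinsupp.finset_sum_apply] at h2
    have h4 : ∀ d ∈ DFinsupp.support (DirectSum.decompose 𝒜 (1 : R)),
        ((DirectSum.decompose 𝒜 (b * (DirectSum.decompose 𝒜 (1 : R) d : R)) e : R))
          = if d = 0 then b * (DirectSum.decompose 𝒜 (1 : R) d : R) else 0 := by
      intro d _
      have hmem : b * (DirectSum.decompose 𝒜 (1 : R) d : R) ∈ 𝒜 (e + d) :=
        hmul hb (DirectSum.decompose 𝒜 (1 : R) d).2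
      by_cases hd : d = 0
      · subst hd
        rw [if_pos rfl]
        have : e + 0 = e := add_zero e
        rw [DirectSum.decompose_of_mem_same 𝒜 (by rwa [this] at hmem)]
      · rw [if_neg hd]
        refine DirectSum.decompose_of_mem_ne 𝒜 hmem ?_
        intro hc
        exact hd (by
          have : e + d = e + 0 := by rw [hc, add_zero]
          exact add_left_cancel this)
    rw [AddSubmonoidClass.coe_finset_sum] at h2
    rw [Finset.sum_congr rfl h4, Finset.sum_ite_eq' _ (0 : Γ)] at h2
    by_cases h0 : (0 : Γ) ∈ DFinsupp.support (DirectSum.decompose 𝒜 (1 : R))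
    · rw [if_pos h0] at h2
      exact h2.symm
    · rw [if_neg h0] at h2
      rw [DFinsupp.notMem_support_iff] at h0
      rw [h0]
      simp only [ZeroMemClass.coe_zero, mul_zero]
      exact h2.symm
  have key2 : ∀ b : R, b * (DirectSum.decompose 𝒜 (1 : R) 0 : R) = b := by
    intro b
    conv_lhs => rw [← DirectSum.sum_support_decompose 𝒜 b]
    rw [Finset.sum_mul]
    have : ∀ d ∈ DFinsupp.support (DirectSum.decompose 𝒜 b),
        (DirectSum.decompose 𝒜 b d : R) * (DirectSum.decompose 𝒜 (1 : R) 0 : R)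
          = (DirectSum.decompose 𝒜 b d : R) :=
      fun d _ => key d _ (DirectSum.decompose 𝒜 b d).2
    rw [Finset.sum_congr rfl this, DirectSum.sum_support_decompose 𝒜 b]
  have h6 : (1 : R) = DirectSum.decompose 𝒜 (1 : R) 0 := by
    conv_lhs => rw [← key2 1, one_mul]
  rw [h6]
  exact (DirectSum.decompose 𝒜 (1 : R) 0).2

end OneMem

section InjContainer

variable (R : Type) [Ring R]

/-- A package: an injective module containing a given module. -/
structure InjModule (M : Type) [AddCommGroup M] [Module R M] where
  Q : Type
  [acgQ : AddCommGroup Q]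
  [modQ : Module R Q]
  injQ : Module.Injective R Q
  emb : M →ₗ[R] Q
  emb_inj : Function.Injective emb

attribute [instance] InjModule.acgQ InjModule.modQ

theorem exists_injModule (M : Type) [AddCommGroup M] [Module R M] :
    Nonempty (InjModule R M) := by
  haveI : CategoryTheory.EnoughInjectives (ModuleCat.{0} R) := inferInstance
  let Mc := ModuleCat.of R M
  let J := CategoryTheory.Injective.under Mc
  haveI hJ : CategoryTheory.Injective (ModuleCat.of R J) :=
    CategoryTheory.Injective.injective_under Mc
  refine ⟨{ Q := J,
            injQ := Module.injective_module_of_injective_object R J,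
            emb := (CategoryTheory.Injective.ι Mc).hom,
            emb_inj := ?_ }⟩
  exact (ModuleCat.mono_iff_injective (CategoryTheory.Injective.ι Mc)).mp inferInstance

end InjContainer

end Aux

section Stmt8

variable {Γ : Type} [DecidableEq Γ] [AddCancelMonoid Γ] {R : Type} [Ring R]

/-- A gr-injective envelope of the graded module `M`: a gr-injective graded-essential
extension. -/
structure GrInjEnvelope (𝒜 : Γ → AddSubgroup R) {M : Type} [AddCommGroup M]
    [Module R M] (ℳ : Γ → AddSubgroup M) where
  carrier : Type
  [acg : AddCommGroup carrier]
  [mod : Module R carrier]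
  grading : Γ → AddSubgroup carrier
  [dec : DirectSum.Decomposition grading]
  smul : SMulClosed 𝒜 grading
  emb : M →ₗ[R] carrier
  emb_inj : Function.Injective emb
  emb_hom : IsHomogeneousHom ℳ grading emb
  injective : IsGrInjective 𝒜 grading
  essential : ∀ U : Submodule R carrier, IsGradedSubmodule grading U → U ≠ ⊥ →
    U ⊓ LinearMap.range emb ≠ ⊥

attribute [instance] GrInjEnvelope.acg GrInjEnvelope.mod GrInjEnvelope.dec

/-- every graded module admits a gr-injective envelope, unique up to
graded isomorphism. -/
theorem grInjEnvelope_exists_unique (𝒜 : Γ → AddSubgroup R)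
    [DirectSum.Decomposition 𝒜] (hmul : MulClosed 𝒜)
    {M : Type} [AddCommGroup M] [Module R M]
    (ℳ : Γ → AddSubgroup M) [DirectSum.Decomposition ℳ] (hsm : SMulClosed 𝒜 ℳ) :
    Nonempty (GrInjEnvelope 𝒜 ℳ) ∧
      ∀ E₁ E₂ : GrInjEnvelope 𝒜 ℳ, GrIso (R := R) E₁.grading E₂.grading := by
  constructor
  · -- existence of a gr-injective envelope
    classical
    haveI hGM : SetLike.GradedMonoid 𝒜 :=
      { one_mem := one_mem_zero 𝒜 hmul
        mul_mem := @fun i j gi gj hi hj => hmul hi hj }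
    haveI hGR : GradedRing 𝒜 := { hGM, ‹DirectSum.Decomposition 𝒜› with }
    obtain ⟨pkg⟩ := exists_injModule R M
    haveI : Module.Injective R pkg.Q := pkg.injQ
    letI instEdec0 : DirectSum.Decomposition (coindGrading 𝒜 pkg.Q) := coindDecomp 𝒜 pkg.Q
    set ℰ := coindGrading 𝒜 pkg.Q with hℰdef
    have hsmE : SMulClosed 𝒜 ℰ := coind_smulClosed 𝒜 pkg.Q
    have hEinj : IsGrInjective 𝒜 ℰ := coind_isGrInjective 𝒜 pkg.Q
    set φ : M →ₗ[R] Coind 𝒜 pkg.Q := psi 𝒜 pkg.Q ℳ hsm pkg.emb with hφdef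
    have hφhom : IsHomogeneousHom ℳ ℰ φ := fun i x hx => psiHom_homog 𝒜 pkg.Q ℳ pkg.emb hx
    have hφinj : Function.Injective φ := by
      have key : ∀ x : M, φ x = 0 → x = 0 := by
        intro x hx0
        have hcomp : ∀ γ : Γ, (DirectSum.decompose ℳ x γ : M) = 0 := by
          intro γ
          apply pkg.emb_inj
          rw [map_zero]
          have h1 : coindCoord 𝒜 pkg.Q γ (φ x) = pkg.emb (DirectSum.decompose ℳ x γ) :=
            psiHom_coord 𝒜 pkg.Q ℳ pkg.emb x γ
          rw [hx0, map_zero] at h1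
          exact h1.symm
        rw [← DirectSum.sum_support_decompose ℳ x]
        exact Finset.sum_eq_zero fun γ _ => hcomp γ
      intro a b hab
      have : φ (a - b) = 0 := by rw [map_sub, hab, sub_self]
      have h2 := key _ this
      rw [sub_eq_zero] at h2
      exact h2
    set W := LinearMap.range φ with hWdef
    have hWgr : IsGradedSubmodule ℰ W := isGraded_range ℳ ℰ φ hφhom
    set S : Set (Submodule R (Coind 𝒜 pkg.Q)) :=
      {X | IsGradedSubmodule ℰ X ∧ W ≤ X ∧
        ∀ U : Submodule R (Coind 𝒜 pkg.Q), IsGradedSubmodule ℰ U → U ≤ X → U ≠ ⊥ →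
          U ⊓ W ≠ ⊥} with hSdef
    have hWS : W ∈ S := ⟨hWgr, le_rfl, fun U hUgr hUW hUne => by rwa [inf_eq_left.mpr hUW]⟩
    have hchainS : ∀ c ⊆ S, IsChain (· ≤ ·) c → ∀ y ∈ c, ∃ ub ∈ S, ∀ z ∈ c, z ≤ ub := by
      intro c hcS hchain y hyc
      refine ⟨sSup c, ⟨isGraded_sSup_chain ℰ (fun X hX => (hcS hX).1) hchain ⟨y, hyc⟩, ?_, ?_⟩,
        fun z hz => le_sSup hz⟩
      · exact le_trans (hcS hyc).2.1 (le_sSup hyc)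
      · intro U hUgr hUle hUne
        obtain ⟨u, γ, huU, huγ, hune⟩ := exists_homog_ne_zero ℰ hUgr hUne
        obtain ⟨X, hXc, huX⟩ :=
          (Submodule.mem_sSup_of_directed ⟨y, hyc⟩ hchain.directedOn).mp (hUle huU)
        have hVgr : IsGradedSubmodule ℰ (Submodule.span R {u}) :=
          isGraded_span_singleton ℰ 𝒜 hsmE huγ
        have hVle : Submodule.span R {u} ≤ X := by
          rw [Submodule.span_le, Set.singleton_subset_iff]; exact huX
        have hVne : Submodule.span R {u} ≠ ⊥ := by
          rw [Ne, Submodule.span_singleton_eq_bot]; exact hune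
        have h1 := (hcS hXc).2.2 _ hVgr hVle hVne
        intro hUW
        apply h1
        rw [eq_bot_iff] at hUW ⊢
        refine le_trans (inf_le_inf_right W ?_) hUW
        rw [Submodule.span_le, Set.singleton_subset_iff]; exact huU
    obtain ⟨E, hWE, hEmax⟩ := zorn_le_nonempty₀ S hchainS W hWS
    obtain ⟨hEgr, hWEle, hEess⟩ := hEmax.prop
    -- second Zorn: a maximal graded complement of E
    set S' : Set (Submodule R (Coind 𝒜 pkg.Q)) :=
      {C | IsGradedSubmodule ℰ C ∧ C ⊓ E = ⊥} with hS'def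
    have hbotS' : (⊥ : Submodule R (Coind 𝒜 pkg.Q)) ∈ S' := ⟨isGraded_bot ℰ, bot_inf_eq E⟩
    have hchainS' : ∀ c ⊆ S', IsChain (· ≤ ·) c → ∀ y ∈ c, ∃ ub ∈ S', ∀ z ∈ c, z ≤ ub := by
      intro c hcS hchain y hyc
      refine ⟨sSup c, ⟨isGraded_sSup_chain ℰ (fun X hX => (hcS hX).1) hchain ⟨y, hyc⟩, ?_⟩,
        fun z hz => le_sSup hz⟩
      rw [eq_bot_iff]
      rintro x ⟨hx1, hx2⟩
      obtain ⟨X, hXc, hxX⟩ :=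
        (Submodule.mem_sSup_of_directed ⟨y, hyc⟩ hchain.directedOn).mp hx1
      have hx3 : x ∈ X ⊓ E := ⟨hxX, hx2⟩
      rw [(hcS hXc).2] at hx3
      exact hx3
    obtain ⟨C, hbotC, hCmax⟩ := zorn_le_nonempty₀ S' hchainS' ⊥ hbotS'
    obtain ⟨hCgr, hCE⟩ := hCmax.prop
    -- the graded submodule E ⊔ C and the projection onto E along C
    have hNgr : IsGradedSubmodule ℰ (E ⊔ C) := isGraded_sup ℰ hEgr hCgr
    letI instN : DirectSum.Decomposition (subGrading ℰ (E ⊔ C)) := subDecomp ℰ hNgr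
    have hcompl : IsCompl (E.comap (E ⊔ C).subtype) (C.comap (E ⊔ C).subtype) := by
      constructor
      · rw [disjoint_iff, eq_bot_iff]
        rintro x ⟨hx1, hx2⟩
        have hx3 : (x : Coind 𝒜 pkg.Q) ∈ C ⊓ E := ⟨hx2, hx1⟩
        rw [hCE, Submodule.mem_bot] at hx3
        rw [Submodule.mem_bot]
        exact Subtype.ext hx3
      · rw [codisjoint_iff, eq_top_iff]
        rintro x -
        obtain ⟨e, he, c, hc, heq⟩ := Submodule.mem_sup.mp x.2
        refine Submodule.mem_sup.mpr
          ⟨⟨e, (le_sup_left : E ≤ E ⊔ C) he⟩, he,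
            ⟨c, (le_sup_right : C ≤ E ⊔ C) hc⟩, hc, ?_⟩
        apply Subtype.ext
        exact heq
    set p0 := Submodule.linearProjOfIsCompl _ _ hcompl with hp0def
    set p : ↥(E ⊔ C) →ₗ[R] Coind 𝒜 pkg.Q :=
      (E ⊔ C).subtype.comp ((Submodule.subtype _).comp p0) with hpdef
    have hpE : ∀ y : ↥(E ⊔ C), (y : Coind 𝒜 pkg.Q) ∈ E → p y = y := by
      intro y hy
      have h1 : p0 y = ⟨y, hy⟩ := Submodule.linearProjOfIsCompl_apply_left hcompl ⟨y, hy⟩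
      show ((((p0 y) : ↥(E ⊔ C))) : Coind 𝒜 pkg.Q) = y
      rw [h1]
    have hpC : ∀ y : ↥(E ⊔ C), (y : Coind 𝒜 pkg.Q) ∈ C → p y = 0 := by
      intro y hy
      have h1 : p0 y = 0 := Submodule.linearProjOfIsCompl_apply_right hcompl ⟨y, hy⟩
      show ((((p0 y) : ↥(E ⊔ C))) : Coind 𝒜 pkg.Q) = 0
      rw [h1]
      rfl
    have hphom : IsHomogeneousHom (subGrading ℰ (E ⊔ C)) ℰ p := by
      intro δ x hx
      obtain ⟨e, he, c, hc, heq⟩ := Submodule.mem_sup.mp x.2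
      have hxec : x = (⟨e, (le_sup_left : E ≤ E ⊔ C) he⟩ : ↥(E ⊔ C))
          + ⟨c, (le_sup_right : C ≤ E ⊔ C) hc⟩ := by
        apply Subtype.ext
        exact heq.symm
      have hpx : p x = e := by
        rw [hxec, map_add, hpE _ he, hpC _ hc, add_zero]
      rw [hpx]
      have hxδ : (x : Coind 𝒜 pkg.Q) ∈ ℰ δ := hx
      have he' : (DirectSum.decompose ℰ e δ : Coind 𝒜 pkg.Q) ∈ E := hEgr e he δ
      have hc' : (DirectSum.decompose ℰ c δ : Coind 𝒜 pkg.Q) ∈ C := hCgr c hc δ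
      have hsum : (DirectSum.decompose ℰ e δ : Coind 𝒜 pkg.Q)
          + (DirectSum.decompose ℰ c δ : Coind 𝒜 pkg.Q) = e + c := by
        have h2 : (DirectSum.decompose ℰ (e + c) δ : Coind 𝒜 pkg.Q) = e + c := by
          rw [heq]
          exact DirectSum.decompose_of_mem_same ℰ hxδ
        rw [DirectSum.decompose_add, DirectSum.add_apply] at h2
        rw [← h2]
        rfl
      have hdiff : (DirectSum.decompose ℰ e δ : Coind 𝒜 pkg.Q) - e
          = c - (DirectSum.decompose ℰ c δ : Coind 𝒜 pkg.Q) := by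
        rw [sub_eq_sub_iff_add_eq_add, hsum, add_comm]
      have hmem0 : (DirectSum.decompose ℰ e δ : Coind 𝒜 pkg.Q) - e ∈ C ⊓ E := by
        constructor
        · rw [hdiff]; exact C.sub_mem hc hc'
        · exact E.sub_mem he' he
      rw [hCE, Submodule.mem_bot, sub_eq_zero] at hmem0
      rw [← hmem0]
      exact (DirectSum.decompose ℰ e δ).2
    obtain ⟨H, hHhom, hHp⟩ := hEinj (↥(E ⊔ C)) (Coind 𝒜 pkg.Q) (subGrading ℰ (E ⊔ C)) ℰ
      (subGrading_smulClosed ℰ 𝒜 hsmE (E ⊔ C)) hsmE ((E ⊔ C).subtype)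
      (subGrading_subtype_hom ℰ (E ⊔ C)) Subtype.val_injective p hphom
    have hHE : ∀ x ∈ E, H x = x := by
      intro x hx
      have h1 := DFunLike.congr_fun hHp (⟨x, (le_sup_left : E ≤ E ⊔ C) hx⟩ : ↥(E ⊔ C))
      simp only [LinearMap.comp_apply, Submodule.subtype_apply] at h1
      rw [h1]
      exact hpE _ hx
    have hHC : ∀ x ∈ C, H x = 0 := by
      intro x hx
      have h1 := DFunLike.congr_fun hHp (⟨x, (le_sup_right : C ≤ E ⊔ C) hx⟩ : ↥(E ⊔ C))
      simp only [LinearMap.comp_apply, Submodule.subtype_apply] at h1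
      rw [h1]
      exact hpC _ hx
    have hrangeS : LinearMap.range H ∈ S := by
      refine ⟨isGraded_range ℰ ℰ H hHhom, le_trans hWE (fun x hx => ⟨x, hHE x hx⟩), ?_⟩
      intro U hUgr hUle hUne
      have hUE : U ⊓ E ≠ ⊥ := by
        intro hUEbot
        have hVgr : IsGradedSubmodule ℰ (U.comap H) := isGraded_comap ℰ ℰ H hHhom hUgr
        have hVE : (U.comap H) ⊓ E = ⊥ := by
          rw [eq_bot_iff]
          rintro x ⟨hx1, hx2⟩
          have hx2' : x ∈ E := hx2
          have hx1' : H x ∈ U := hx1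
          rw [hHE x hx2'] at hx1'
          have hx3 : x ∈ U ⊓ E := ⟨hx1', hx2'⟩
          rw [hUEbot] at hx3
          exact hx3
        have hCV : C ≤ U.comap H := by
          intro x hx
          rw [Submodule.mem_comap, hHC x hx]
          exact U.zero_mem
        have hVC : U.comap H ≤ C := hCmax.2 ⟨hVgr, hVE⟩ hCV
        apply hUne
        rw [eq_bot_iff]
        intro u hu
        obtain ⟨y, rfl⟩ := hUle hu
        have hy : y ∈ U.comap H := hu
        rw [Submodule.mem_bot]
        exact hHC y (hVC hy)
      have h2 := hEess (U ⊓ E) (isGraded_inf ℰ hUgr hEgr) inf_le_right hUE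
      intro hUW
      apply h2
      rw [eq_bot_iff] at hUW ⊢
      exact le_trans (inf_le_inf_right W inf_le_left) hUW
    have hErange : LinearMap.range H = E :=
      le_antisymm (hEmax.2 hrangeS (fun x hx => ⟨x, hHE x hx⟩)) (fun x hx => ⟨x, hHE x hx⟩)
    have hHmem : ∀ x, H x ∈ E := fun x => hErange ▸ LinearMap.mem_range_self H x
    letI instEdec : DirectSum.Decomposition (subGrading ℰ E) := subDecomp ℰ hEgr
    refine ⟨{ carrier := ↥E
              acg := inferInstance
              mod := inferInstance
              grading := subGrading ℰ E
              dec := instEdec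
              smul := subGrading_smulClosed ℰ 𝒜 hsmE E
              emb := LinearMap.codRestrict E φ (fun m => hWE ⟨m, rfl⟩)
              emb_inj := ?_
              emb_hom := ?_
              injective := ?_
              essential := ?_ }⟩
    · intro a b hab
      apply hφinj
      have h1 := congrArg (Subtype.val) hab
      simpa using h1
    · intro i x hx
      exact hφhom i x hx
    · -- gr-injectivity of E
      intro A B _ _ _ _ 𝒳 𝒴 _ _ hsmA hsmB g hg hginj f hf
      have hf' : IsHomogeneousHom 𝒳 ℰ (E.subtype.comp f) := by
        intro i x hx
        simp only [LinearMap.comp_apply, Submodule.subtype_apply]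
        exact hf i x hx
      obtain ⟨H2, hH2hom, hH2⟩ := hEinj A B 𝒳 𝒴 hsmA hsmB g hg hginj (E.subtype.comp f) hf'
      refine ⟨(LinearMap.codRestrict E H hHmem).comp H2, ?_, ?_⟩
      · intro i x hx
        show (E.subtype ((LinearMap.codRestrict E H hHmem) (H2 x))) ∈ ℰ i
        simp only [Submodule.subtype_apply, LinearMap.codRestrict_apply]
        exact hHhom i (H2 x) (hH2hom i x hx)
      · apply LinearMap.ext
        intro a
        have h1 : H2 (g a) = (f a : Coind 𝒜 pkg.Q) := by
          have := DFunLike.congr_fun hH2 a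
          simpa using this
        apply Subtype.ext
        show H (H2 (g a)) = (f a : Coind 𝒜 pkg.Q)
        rw [h1]
        exact hHE _ (f a).2
    · -- graded-essentiality
      intro U hUgr hUne
      have hU'gr : IsGradedSubmodule ℰ (U.map E.subtype) := isGraded_map_subtype ℰ hEgr hUgr
      have hU'le : U.map E.subtype ≤ E := by
        rintro x ⟨u, hu, rfl⟩
        exact u.2
      have hU'ne : U.map E.subtype ≠ ⊥ := by
        obtain ⟨u, huU, hune⟩ := Submodule.exists_mem_ne_zero_of_ne_bot hUne
        intro hbot
        have : (u : Coind 𝒜 pkg.Q) ∈ U.map E.subtype := ⟨u, huU, rfl⟩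
        rw [hbot, Submodule.mem_bot] at this
        exact hune (Subtype.ext this)
      have h1 := hEess _ hU'gr hU'le hU'ne
      rw [Submodule.ne_bot_iff] at h1 ⊢
      obtain ⟨x, ⟨hx1, hx2⟩, hxne⟩ := h1
      obtain ⟨u, huU, rfl⟩ := hx1
      obtain ⟨m, hm⟩ := hx2
      refine ⟨u, ⟨huU, ⟨m, ?_⟩⟩, ?_⟩
      · apply Subtype.ext
        show φ m = (u : Coind 𝒜 pkg.Q)
        exact hm
      · intro h0
        apply hxne
        rw [h0]
        rfl
  · -- uniqueness
    intro E₁ E₂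
    obtain ⟨h, hhom, hcomp⟩ := E₂.injective M E₁.carrier ℳ E₁.grading hsm E₁.smul
      E₁.emb E₁.emb_hom E₁.emb_inj E₂.emb E₂.emb_hom
    have hkerbot : LinearMap.ker h = ⊥ := by
      by_contra hne
      apply E₁.essential (LinearMap.ker h)
        (isGraded_ker E₁.grading E₂.grading h hhom) hne
      rw [eq_bot_iff]
      rintro x ⟨hx1, hx2⟩
      obtain ⟨m, rfl⟩ := hx2
      have hx1' : h (E₁.emb m) = 0 := hx1
      have h1 : E₂.emb m = 0 := by
        rw [← hx1']
        exact (DFunLike.congr_fun hcomp m).symm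
      have h2 : m = 0 := E₂.emb_inj (by rw [h1, map_zero])
      rw [h2, map_zero]
      exact Submodule.zero_mem ⊥
    have hinj : Function.Injective h := by
      rw [← LinearMap.ker_eq_bot]
      exact hkerbot
    have hid : IsHomogeneousHom E₁.grading E₁.grading (LinearMap.id : E₁.carrier →ₗ[R] E₁.carrier) :=
      fun i x hx => hx
    obtain ⟨π, hπhom, hπcomp⟩ := E₁.injective E₁.carrier E₂.carrier E₁.grading E₂.grading
      E₁.smul E₂.smul h hhom hinj LinearMap.id hid
    have hπh : ∀ x, π (h x) = x := fun x => DFunLike.congr_fun hπcomp x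
    have hπker : LinearMap.ker π = ⊥ := by
      by_contra hne
      apply E₂.essential (LinearMap.ker π)
        (isGraded_ker E₂.grading E₁.grading π hπhom) hne
      rw [eq_bot_iff]
      rintro x ⟨hx1, hx2⟩
      obtain ⟨m, rfl⟩ := hx2
      have hx1' : π (E₂.emb m) = 0 := hx1
      have h1 : E₂.emb m = h (E₁.emb m) := (DFunLike.congr_fun hcomp m).symm
      rw [h1, hπh] at hx1'
      have h2 : m = 0 := E₁.emb_inj (by rw [hx1', map_zero])
      rw [h2, map_zero]
      exact Submodule.zero_mem ⊥
    have hπinj : Function.Injective π := by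
      rw [← LinearMap.ker_eq_bot]
      exact hπker
    have hhπ : ∀ x, h (π x) = x := by
      intro x
      apply hπinj
      rw [hπh]
    refine ⟨LinearEquiv.ofLinear h π ?_ ?_, ?_, ?_⟩
    · apply LinearMap.ext; intro x; simp only [LinearMap.comp_apply, LinearMap.id_apply]; exact hhπ x
    · apply LinearMap.ext; intro x; simp only [LinearMap.comp_apply, LinearMap.id_apply]; exact hπh x
    · intro i x hx
      show h x ∈ E₂.grading i
      exact hhom i x hx
    · intro i x hx
      show π x ∈ E₁.grading i
      exact hπhom i x hx

end Stmt8

end GradedPaper
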